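/- The function χ : ℝ → ℝ defined by χ(x) = 2x·(eˣ + 1)/(eˣ − 1) for x ≠ 0 and χ(0) = 4 is convex on all of ℝ. -/

import Mathlib

open Real Set Filter Topology

/-- `χ(x) = 2x·(eˣ + 1)/(eˣ − 1)` for `x ≠ 0`, with `χ(0) = 4` (its limiting value). -/
noncomputable def chi (x : ℝ) : ℝ :=
  if x = 0 then 4 else 2 * x * ((Real.exp x + 1) / (Real.exp x - 1))

lemma exp_sub_one_ne {x : ℝ} (hx : x ≠ 0) : Real.exp x - 1 ≠ 0 := by
  intro h
  have : Real.exp x = 1 := by linarith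
  rw [Real.exp_eq_one_iff] at this
  exact hx this

lemma chi_even (x : ℝ) : chi (-x) = chi x := by
  rcases eq_or_ne x 0 with rfl | hx
  · simp
  · have h1 : Real.exp x - 1 ≠ 0 := exp_sub_one_ne hx
    have h3 : Real.exp x ≠ 0 := (Real.exp_pos x).ne'
    rw [chi, chi, if_neg (neg_ne_zero.mpr hx), if_neg hx, Real.exp_neg]
    have h2 : 1 - Real.exp x ≠ 0 := fun h => h1 (by linarith)
    have h4 : (Real.exp x)⁻¹ - 1 ≠ 0 := by
      rw [← Real.exp_neg]; exact exp_sub_one_ne (neg_ne_zero.mpr hx)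
    have key : ((Real.exp x)⁻¹ + 1) / ((Real.exp x)⁻¹ - 1)
        = (1 + Real.exp x) / (1 - Real.exp x) := by
      rw [div_eq_div_iff h4 h2]
      field_simp
    rw [key]
    field_simp
    ring

lemma chi_eventually_eq {x : ℝ} (hx : x ≠ 0) :
    chi =ᶠ[𝓝 x] fun y => 2 * y * ((Real.exp y + 1) / (Real.exp y - 1)) := by
  filter_upwards [eventually_ne_nhds hx] with y hy
  simp [chi, if_neg hy]

lemma continuousAt_chi_ne {x : ℝ} (hx : x ≠ 0) : ContinuousAt chi x := by
  have h : ContinuousAt (fun y => 2 * y * ((Real.exp y + 1) / (Real.exp y - 1))) x := by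
    exact (continuousAt_id.const_mul 2).mul
      (((Real.continuous_exp.continuousAt).add continuousAt_const).div
        ((Real.continuous_exp.continuousAt).sub continuousAt_const) (exp_sub_one_ne hx))
  exact h.congr (chi_eventually_eq hx).symm

lemma continuousAt_chi_zero : ContinuousAt chi 0 := by
  have hslope : Tendsto (fun y : ℝ => (Real.exp y - 1) / y) (𝓝[≠] 0) (𝓝 1) := by
    have h := (Real.hasDerivAt_exp 0)
    rw [hasDerivAt_iff_tendsto_slope] at h
    rw [Real.exp_zero] at h
    exact h.congr fun y => by rw [slope_def_field]; simp [Real.exp_zero]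
  have hinv : Tendsto (fun y : ℝ => y / (Real.exp y - 1)) (𝓝[≠] 0) (𝓝 1) := by
    have := hslope.inv₀ one_ne_zero
    simp only [inv_div, inv_one] at this
    exact this
  have hmul : Tendsto (fun y : ℝ => 2 * (Real.exp y + 1) * (y / (Real.exp y - 1)))
      (𝓝[≠] 0) (𝓝 4) := by
    have h1 : Tendsto (fun y : ℝ => 2 * (Real.exp y + 1)) (𝓝[≠] 0) (𝓝 4) := by
      have hc : ContinuousAt (fun y : ℝ => 2 * (Real.exp y + 1)) 0 := by fun_prop
      have := hc.tendsto.mono_left (nhdsWithin_le_nhds (s := {(0:ℝ)}ᶜ))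
      norm_num [Real.exp_zero] at this
      exact this
    simpa using h1.mul hinv
  have hchi : Tendsto chi (𝓝[≠] 0) (𝓝 4) := by
    refine hmul.congr' ?_
    filter_upwards [self_mem_nhdsWithin] with y hy
    simp only [Set.mem_compl_iff, Set.mem_singleton_iff] at hy
    rw [chi, if_neg hy]
    ring
  rw [ContinuousAt]
  have : chi 0 = 4 := by simp [chi]
  rw [this, ← nhdsNE_sup_pure (0 : ℝ), tendsto_sup]
  exact ⟨hchi, by rw [tendsto_pure_left]; intro s hs; simpa [chi] using mem_of_mem_nhds hs⟩

noncomputable def dchi (x : ℝ) : ℝ :=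
  2 * (Real.exp x + 1) / (Real.exp x - 1) - 4 * x * Real.exp x / (Real.exp x - 1) ^ 2

lemma hasDerivAt_chi {x : ℝ} (hx : x ≠ 0) : HasDerivAt chi (dchi x) x := by
  have hne := exp_sub_one_ne hx
  have he := Real.hasDerivAt_exp x
  have h1 : HasDerivAt (fun y => Real.exp y + 1) (Real.exp x) x := he.add_const 1
  have h2 : HasDerivAt (fun y => Real.exp y - 1) (Real.exp x) x := he.sub_const 1
  have h3 := h1.div h2 hne
  have h4 : HasDerivAt (fun y : ℝ => 2 * y) 2 x := by
    simpa using (hasDerivAt_id x).const_mul 2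
  have h5 := h4.mul h3
  have h6 : HasDerivAt (fun y => 2 * y * ((Real.exp y + 1) / (Real.exp y - 1))) (dchi x) x := by
    refine h5.congr_deriv ?_
    rw [dchi]
    simp only [Pi.div_apply]
    field_simp
    ring
  exact h6.congr_of_eventuallyEq (chi_eventually_eq hx)

noncomputable def ddchi (x : ℝ) : ℝ :=
  4 * Real.exp x * (x * (Real.exp x + 1) - 2 * (Real.exp x - 1)) / (Real.exp x - 1) ^ 3

lemma hasDerivAt_dchi {x : ℝ} (hx : x ≠ 0) : HasDerivAt dchi (ddchi x) x := by
  have hne := exp_sub_one_ne hx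
  have he := Real.hasDerivAt_exp x
  have h1 : HasDerivAt (fun y => 2 * (Real.exp y + 1)) (2 * Real.exp x) x :=
    (he.add_const 1).const_mul 2
  have h2 : HasDerivAt (fun y => Real.exp y - 1) (Real.exp x) x := he.sub_const 1
  have h3 := h1.div h2 hne
  have h4 : HasDerivAt (fun y : ℝ => 4 * y) 4 x := by simpa using (hasDerivAt_id x).const_mul 4
  have h5 := h4.mul he
  have h6 := h2.pow 2
  have h7 := h5.div h6 (pow_ne_zero 2 hne)
  have h8 := h3.sub h7
  refine h8.congr_deriv ?_
  rw [ddchi]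
  simp only [Pi.mul_apply, Pi.pow_apply]
  field_simp
  ring

lemma aux_key : ∀ ⦃x : ℝ⦄, 0 ≤ x → 2 * (Real.exp x - 1) ≤ x * (Real.exp x + 1) := by
  have hg : ∀ y : ℝ, HasDerivAt (fun z => z * (Real.exp z + 1) - 2 * (Real.exp z - 1))
      ((y - 1) * Real.exp y + 1) y := by
    intro y
    have he := Real.hasDerivAt_exp y
    have h1 := (hasDerivAt_id y).mul (he.add_const 1)
    have h2 := (he.sub_const 1).const_mul 2
    refine (h1.sub h2).congr_deriv ?_
    simp only [id_eq]
    ring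
  intro x hx
  have mono : MonotoneOn (fun z : ℝ => z * (Real.exp z + 1) - 2 * (Real.exp z - 1)) (Ici 0) := by
    apply monotoneOn_of_deriv_nonneg (convex_Ici 0)
    · fun_prop
    · intro y _
      exact (hg y).differentiableAt.differentiableWithinAt
    · intro y _
      rw [(hg y).deriv]
      have h1 : (1 : ℝ) - y ≤ Real.exp (-y) := by linarith [Real.add_one_le_exp (-y)]
      have h2 : Real.exp y * Real.exp (-y) = 1 := by rw [← Real.exp_add]; simp
      nlinarith [Real.exp_pos y, Real.exp_pos (-y),
        mul_le_mul_of_nonneg_right h1 (Real.exp_pos y).le]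
  have h0 := mono (self_mem_Ici) hx hx
  simp [Real.exp_zero] at h0
  linarith

lemma sinh_key {x : ℝ} (hx : 0 < x) : 2 * x * Real.exp x ≤ Real.exp x ^ 2 - 1 := by
  have h1 : x ≤ Real.sinh x := Real.self_le_sinh_iff.mpr hx.le
  rw [Real.sinh_eq] at h1
  have h2 : Real.exp x * Real.exp (-x) = 1 := by rw [← Real.exp_add]; simp
  nlinarith [Real.exp_pos x, Real.exp_pos (-x)]

lemma dchi_nonneg {x : ℝ} (hx : 0 < x) : 0 ≤ dchi x := by
  have hne := exp_sub_one_ne hx.ne'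
  have h : dchi x = (2 * (Real.exp x ^ 2 - 1) - 4 * x * Real.exp x) / (Real.exp x - 1) ^ 2 := by
    rw [dchi]
    field_simp
    ring
  rw [h]
  apply div_nonneg _ (sq_nonneg _)
  nlinarith [sinh_key hx]

lemma ddchi_nonneg {x : ℝ} (hx : 0 < x) : 0 ≤ ddchi x := by
  have h1 : (0:ℝ) ≤ Real.exp x - 1 := by nlinarith [Real.add_one_le_exp x]
  rw [ddchi]
  apply div_nonneg _ (pow_nonneg h1 3)
  apply mul_nonneg (by positivity)
  linarith [aux_key hx.le]

/-- The function `χ` is convex on all of `ℝ`. -/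
theorem chi_convexOn : ConvexOn ℝ Set.univ chi := by
  have hcont : Continuous chi := by
    rw [continuous_iff_continuousAt]
    intro x
    rcases eq_or_ne x 0 with rfl | hx
    · exact continuousAt_chi_zero
    · exact continuousAt_chi_ne hx
  have hconv : ConvexOn ℝ (Ici 0) chi := by
    apply convexOn_of_hasDerivWithinAt2_nonneg (convex_Ici 0) hcont.continuousOn
      (f' := dchi) (f'' := ddchi)
    · intro x hx
      rw [interior_Ici] at hx
      exact (hasDerivAt_chi hx.ne').hasDerivWithinAt
    · intro x hx
      rw [interior_Ici] at hx
      exact (hasDerivAt_dchi hx.ne').hasDerivWithinAt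
    · intro x hx
      rw [interior_Ici] at hx
      exact ddchi_nonneg hx
  have hmono : MonotoneOn chi (Ici 0) := by
    apply monotoneOn_of_deriv_nonneg (convex_Ici 0) hcont.continuousOn
    · intro x hx
      rw [interior_Ici] at hx
      exact (hasDerivAt_chi hx.ne').differentiableAt.differentiableWithinAt
    · intro x hx
      rw [interior_Ici] at hx
      rw [(hasDerivAt_chi hx.ne').deriv]
      exact dchi_nonneg hx
  have himg : (fun x : ℝ => |x|) '' Set.univ = Ici 0 := by
    ext y
    constructor
    · rintro ⟨x, -, rfl⟩
      exact abs_nonneg x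
    · intro hy
      exact ⟨y, trivial, abs_of_nonneg hy⟩
  have habs : ConvexOn ℝ Set.univ (fun x : ℝ => |x|) := by
    exact convexOn_univ_norm (E := ℝ)
  have hcomp : ConvexOn ℝ Set.univ (chi ∘ fun x : ℝ => |x|) :=
    ConvexOn.comp (by rwa [himg]) habs (by rwa [himg])
  have heq : chi ∘ (fun x : ℝ => |x|) = chi := by
    funext x
    rcases le_or_gt 0 x with h | h
    · simp [Function.comp, abs_of_nonneg h]
    · simp [Function.comp, abs_of_neg h, chi_even]
  rwa [heq] at hcomp
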